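/- Let U be a non-decreasing right-continuous function on ℝ with U(x) = 0 for all x < 0 and U(x) → ∞ as x → ∞, and suppose log U is regularly varying of index β ∈ (0,1) at ∞. Then for every r > 0, −log ∫_{(x,∞)} e^{−ry} dU(y) ~ r x as x → ∞. -/

import Mathlib

open Filter MeasureTheory Real Set

/-- `l` is slowly varying at `∞` (`l ∈ R₀`). -/
def SlowlyVarying (l : ℝ → ℝ) : Prop :=
  (∀ᶠ x in atTop, 0 < l x) ∧
  ∀ c : ℝ, 0 < c → Tendsto (fun x => l (c * x) / l x) atTop (nhds 1)

/-- `f` is regularly varying of index `α` at `∞` (`f ∈ R_α`): `f x = x^α l(x)` for a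
slowly varying `l`. -/
def RegularlyVarying (α : ℝ) (f : ℝ → ℝ) : Prop :=
  ∃ l : ℝ → ℝ, SlowlyVarying l ∧ ∀ᶠ x in atTop, f x = x ^ α * l x


lemma aux_growth (g : ℝ → ℝ) (x₀ μ : ℝ) (hx₀ : 1 ≤ x₀) (hg0 : 0 < g x₀)
    (hmono : ∀ a b : ℝ, x₀ ≤ a → a ≤ b → g a ≤ g b)
    (hμ1 : 1 ≤ μ) (hμ2 : μ < 2)
    (hstep : ∀ x : ℝ, x₀ ≤ x → g (2 * x) ≤ μ * g x)
    (s : ℝ) (hs : 0 < s) :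
    ∀ᶠ y in atTop, g y ≤ s * y := by
  have hx₀0 : (0:ℝ) < x₀ := lt_of_lt_of_le one_pos hx₀
  have hμ0 : (0:ℝ) < μ := lt_of_lt_of_le one_pos hμ1
  have key : ∀ n : ℕ, ∀ y : ℝ, x₀ ≤ y → y ≤ 2 ^ n * x₀ → g y ≤ μ ^ n * g x₀ := by
    intro n
    induction n with
    | zero =>
      intro y h1 h2
      simp only [pow_zero, one_mul] at h2 ⊢
      have : y = x₀ := le_antisymm h2 h1
      rw [this]
    | succ n ih =>
      intro y h1 h2
      rcases le_or_gt y (2 * x₀) with hc | hc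
      · have h3 : g y ≤ g (2 * x₀) := hmono _ _ h1 hc
        have h4 : g (2 * x₀) ≤ μ * g x₀ := hstep _ le_rfl
        have h5 : μ * g x₀ ≤ μ ^ (n + 1) * g x₀ := by
          have : μ ≤ μ ^ (n + 1) := by
            calc μ = μ ^ 1 := (pow_one μ).symm
            _ ≤ μ ^ (n + 1) := pow_le_pow_right₀ hμ1 (by omega)
          nlinarith [hg0.le]
        linarith
      · have h1' : x₀ ≤ y / 2 := by linarith
        have h2' : y / 2 ≤ 2 ^ n * x₀ := by
          rw [pow_succ] at h2; nlinarith
        have := ih (y / 2) h1' h2'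
        have hgy : g y ≤ μ * g (y / 2) := by
          have := hstep (y / 2) h1'
          rwa [mul_div_cancel₀ _ (two_ne_zero)] at this
        calc g y ≤ μ * g (y / 2) := hgy
          _ ≤ μ * (μ ^ n * g x₀) := by nlinarith
          _ = μ ^ (n + 1) * g x₀ := by ring
  obtain ⟨N, hN⟩ := exists_pow_lt_of_lt_one
    (show (0:ℝ) < s * x₀ / (μ * g x₀) by positivity)
    (show μ / 2 < 1 by linarith)
  filter_upwards [eventually_ge_atTop ((2:ℝ) ^ N * x₀)] with y hy
  have h2N : (1:ℝ) ≤ 2 ^ N := one_le_pow₀ (by norm_num)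
  have hyx₀ : x₀ ≤ y := le_trans (by nlinarith) hy
  have hy0 : (0:ℝ) < y := lt_of_lt_of_le hx₀0 hyx₀
  set t : ℝ := y / x₀ with ht
  have ht1 : (1:ℝ) ≤ t := (one_le_div hx₀0).2 hyx₀
  have ht0 : (0:ℝ) < t := lt_of_lt_of_le one_pos ht1
  set n : ℕ := ⌊Real.logb 2 t⌋₊ with hn
  have hlb_nonneg : 0 ≤ Real.logb 2 t := Real.logb_nonneg one_lt_two ht1
  have hNn : N ≤ n := by
    apply Nat.le_floor
    rw [Real.le_logb_iff_rpow_le one_lt_two ht0, Real.rpow_natCast]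
    rw [ht, le_div_iff₀ hx₀0]
    exact hy
  have h2n_le : (2:ℝ) ^ n ≤ t := by
    have h1 : ((n:ℝ)) ≤ Real.logb 2 t := Nat.floor_le hlb_nonneg
    calc (2:ℝ) ^ n = (2:ℝ) ^ ((n:ℝ)) := (Real.rpow_natCast 2 n).symm
      _ ≤ (2:ℝ) ^ (Real.logb 2 t) := Real.rpow_le_rpow_of_exponent_le one_le_two h1
      _ = t := Real.rpow_logb two_pos (by norm_num) ht0
  have h2n_ge : t ≤ (2:ℝ) ^ (n + 1) := by
    have h1 : Real.logb 2 t < (n:ℝ) + 1 := Nat.lt_floor_add_one _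
    have : t < (2:ℝ) ^ ((n:ℝ) + 1) := by
      calc t = (2:ℝ) ^ (Real.logb 2 t) := (Real.rpow_logb two_pos (by norm_num) ht0).symm
        _ < (2:ℝ) ^ ((n:ℝ) + 1) := Real.rpow_lt_rpow_of_exponent_lt one_lt_two h1
    have h2 : (2:ℝ) ^ ((n:ℝ) + 1) = (2:ℝ) ^ (n + 1) := by
      rw [← Real.rpow_natCast 2 (n+1)]; norm_num
    linarith [h2 ▸ this]
  have hy_le : y ≤ 2 ^ (n + 1) * x₀ := by
    rw [ht, div_le_iff₀ hx₀0] at h2n_ge; linarith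
  have hy_ge : 2 ^ n * x₀ ≤ y := by
    rw [ht, le_div_iff₀ hx₀0] at h2n_le; linarith
  have hkey := key (n + 1) y hyx₀ hy_le
  have hμ2n : (μ / 2) ^ n ≤ (μ / 2) ^ N :=
    pow_le_pow_of_le_one (by positivity) (by linarith) hNn
  have hfin : μ ^ (n + 1) * g x₀ ≤ s * (2 ^ n * x₀) := by
    have e1 : μ ^ (n + 1) = μ * ((μ / 2) ^ n * 2 ^ n) := by
      rw [div_pow, pow_succ]
      field_simp
    rw [e1]
    have h2npos : (0:ℝ) < 2 ^ n := by positivity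
    have hmm : (μ / 2) ^ n * (μ * g x₀) ≤ (μ / 2) ^ N * (μ * g x₀) :=
      mul_le_mul_of_nonneg_right hμ2n (by positivity)
    have h2 : (μ / 2) ^ N * (μ * g x₀) ≤ s * x₀ :=
      le_of_lt ((lt_div_iff₀ (by positivity)).1 hN)
    nlinarith
  have := hkey.trans hfin
  nlinarith


lemma aux_cover : Set.Ioi (0:ℝ) = ⋃ n : ℕ, Set.Ioc (n:ℝ) ((n:ℝ)+1) := by
  ext y
  simp only [Set.mem_Ioi, Set.mem_iUnion, Set.mem_Ioc]
  constructor
  · intro hy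
    refine ⟨⌈y⌉₊ - 1, ?_, ?_⟩
    · by_contra h
      push_neg at h
      have h1 : (⌈y⌉₊ : ℕ) ≤ ⌈y⌉₊ - 1 := Nat.ceil_le.2 h
      have h2 : 1 ≤ ⌈y⌉₊ := Nat.one_le_ceil_iff.2 hy
      omega
    · have h2 : 1 ≤ ⌈y⌉₊ := Nat.one_le_ceil_iff.2 hy
      have : ((⌈y⌉₊ - 1 : ℕ) : ℝ) + 1 = (⌈y⌉₊ : ℝ) := by
        have : (⌈y⌉₊ - 1 : ℕ) + 1 = ⌈y⌉₊ := by omega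
        rw [← this]; push_cast; ring
      rw [this]
      exact Nat.le_ceil y
  · rintro ⟨n, h1, _⟩
    exact lt_of_le_of_lt (Nat.cast_nonneg n) h1

lemma aux_fin (U : StieltjesFunction ℝ) (C s : ℝ) (hC : 0 < C) (hs : 0 < s)
    (hnn : ∀ y : ℝ, 0 ≤ U y)
    (hb : ∀ y : ℝ, 0 ≤ y → U y ≤ C * Real.exp (s / 2 * y)) :
    (∫⁻ y in Set.Ioi (0:ℝ), ENNReal.ofReal (Real.exp (-(s * y))) ∂U.measure) < ⊤ := by
  have hmeas : ∀ n : ℕ, MeasurableSet (Set.Ioc (n:ℝ) ((n:ℝ)+1)) := fun n => measurableSet_Ioc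
  have hdisj : Pairwise (Function.onFun Disjoint (fun n : ℕ => Set.Ioc (n:ℝ) ((n:ℝ)+1))) := by
    intro m n hmn
    apply Set.Ioc_disjoint_Ioc.2
    rcases hmn.lt_or_gt with h | h
    · have : (m:ℝ) + 1 ≤ (n:ℝ) := by exact_mod_cast Nat.succ_le_of_lt h
      calc min ((m:ℝ)+1) ((n:ℝ)+1) ≤ (m:ℝ)+1 := min_le_left _ _
        _ ≤ (n:ℝ) := this
        _ ≤ max (m:ℝ) (n:ℝ) := le_max_right _ _
    · have : (n:ℝ) + 1 ≤ (m:ℝ) := by exact_mod_cast Nat.succ_le_of_lt h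
      calc min ((m:ℝ)+1) ((n:ℝ)+1) ≤ (n:ℝ)+1 := min_le_right _ _
        _ ≤ (m:ℝ) := this
        _ ≤ max (m:ℝ) (n:ℝ) := le_max_left _ _
  rw [aux_cover, lintegral_iUnion hmeas hdisj]
  have hterm : ∀ n : ℕ,
      (∫⁻ y in Set.Ioc (n:ℝ) ((n:ℝ)+1), ENNReal.ofReal (Real.exp (-(s * y))) ∂U.measure)
        ≤ ENNReal.ofReal (C * Real.exp (s/2)) * (ENNReal.ofReal (Real.exp (-(s/2)))) ^ n := by
    intro n
    have h1 : (∫⁻ y in Set.Ioc (n:ℝ) ((n:ℝ)+1), ENNReal.ofReal (Real.exp (-(s * y))) ∂U.measure)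
        ≤ ∫⁻ _ in Set.Ioc (n:ℝ) ((n:ℝ)+1), ENNReal.ofReal (Real.exp (-(s * n))) ∂U.measure := by
      apply setLIntegral_mono measurable_const
      intro y hy
      apply ENNReal.ofReal_le_ofReal
      apply Real.exp_le_exp.2
      have := hy.1
      nlinarith [hy.1]
    rw [setLIntegral_const, StieltjesFunction.measure_Ioc] at h1
    have h2 : U ((n:ℝ)+1) - U n ≤ C * Real.exp (s/2 * ((n:ℝ)+1)) :=
      le_trans (by linarith [hnn (n:ℝ)]) (hb _ (by positivity))
    have h3 : ENNReal.ofReal (Real.exp (-(s * n))) * ENNReal.ofReal (U ((n:ℝ)+1) - U n)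
        ≤ ENNReal.ofReal (Real.exp (-(s * n))) * ENNReal.ofReal (C * Real.exp (s/2 * ((n:ℝ)+1))) :=
      mul_le_mul_right (ENNReal.ofReal_le_ofReal h2) _
    refine h1.trans (h3.trans ?_)
    rw [← ENNReal.ofReal_mul (Real.exp_nonneg _)]
    have hexp : Real.exp (-(s * (n:ℝ))) * Real.exp (s/2 * ((n:ℝ)+1))
        = Real.exp (s/2) * (Real.exp (-(s/2))) ^ n := by
      rw [← Real.exp_nat_mul, ← Real.exp_add, ← Real.exp_add]
      congr 1
      ring
    have heq : Real.exp (-(s * n)) * (C * Real.exp (s/2 * ((n:ℝ)+1)))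
        = (C * Real.exp (s/2)) * (Real.exp (-(s/2))) ^ n := by
      linear_combination C * hexp
    rw [heq, ENNReal.ofReal_mul (by positivity), ENNReal.ofReal_pow (Real.exp_nonneg _)]
  calc (∑' n : ℕ, ∫⁻ y in Set.Ioc (n:ℝ) ((n:ℝ)+1), ENNReal.ofReal (Real.exp (-(s * y))) ∂U.measure)
      ≤ ∑' n : ℕ, ENNReal.ofReal (C * Real.exp (s/2)) * (ENNReal.ofReal (Real.exp (-(s/2)))) ^ n :=
        ENNReal.tsum_le_tsum hterm
    _ = ENNReal.ofReal (C * Real.exp (s/2)) * ∑' n : ℕ, (ENNReal.ofReal (Real.exp (-(s/2)))) ^ n :=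
        ENNReal.tsum_mul_left
    _ < ⊤ := by
        rw [ENNReal.tsum_geometric]
        apply ENNReal.mul_lt_top ENNReal.ofReal_lt_top
        apply ENNReal.inv_lt_top.2
        apply tsub_pos_of_lt
        apply ENNReal.ofReal_lt_one.2
        apply Real.exp_lt_one_iff.2
        linarith

set_option maxHeartbeats 1000000 in
/-- Let `U` be non-decreasing right-continuous, vanishing on `(-∞,0)`,
with `U(x) → ∞`, and suppose `log U` is regularly varying of index `β ∈ (0,1)` at `∞`.
Then for every `r > 0`, `-log ∫_{(x,∞)} e^{-r y} dU(y) ~ r x` as `x → ∞`. -/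
theorem neg_log_stieltjes_integral_of_log_regularlyVarying
    (U : StieltjesFunction ℝ) (hU0 : ∀ x < 0, U x = 0)
    (hUtop : Tendsto U atTop atTop)
    (β : ℝ) (hβ : β ∈ Set.Ioo (0 : ℝ) 1)
    (hreg : RegularlyVarying β (fun x => Real.log (U x))) :
    ∀ r : ℝ, 0 < r →
      Tendsto (fun x =>
          -Real.log ((∫⁻ y in Set.Ioi x,
              ENNReal.ofReal (Real.exp (-(r * y))) ∂U.measure).toReal) / (r * x))
        atTop (nhds 1) := by
  obtain ⟨l, ⟨hlpos, hlslow⟩, heq⟩ := hreg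
  simp only at heq
  have hβ0 := hβ.1
  have hβ1 := hβ.2
  have hnn : ∀ y : ℝ, 0 ≤ U y := by
    intro y
    rcases lt_or_ge y 0 with h | h
    · exact (hU0 y h).ge
    · calc (0:ℝ) = U (-1) := (hU0 (-1) (by norm_num)).symm
        _ ≤ U y := U.mono (by linarith)
  have hlog_top : Tendsto (fun x => Real.log (U x)) atTop atTop :=
    Real.tendsto_log_atTop.comp hUtop
  have hU1 : ∀ᶠ x in atTop, 1 ≤ U x := hUtop.eventually_ge_atTop 1
  have hmeasf : ∀ c : ℝ, Measurable (fun y : ℝ => ENNReal.ofReal (Real.exp (-(c * y)))) := by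
    intro c
    fun_prop
  -- growth bound
  have hgrow : ∀ s : ℝ, 0 < s → ∀ᶠ y in atTop, Real.log (U y) ≤ s * y := by
    intro s hs
    set θ := (2:ℝ) ^ β with hθdef
    have hθ1 : 1 < θ := by
      have := Real.rpow_lt_rpow_of_exponent_lt one_lt_two (show (0:ℝ) < β from hβ0)
      simpa [Real.rpow_zero] using this
    have hθ2 : θ < 2 := by
      have := Real.rpow_lt_rpow_of_exponent_lt one_lt_two (show β < (1:ℝ) from hβ1)
      simpa [Real.rpow_one] using this
    have hθ0 : (0:ℝ) < θ := by linarith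
    set μ := (θ + 2) / 2 with hμdef
    have hμθ : θ < μ := by rw [hμdef]; linarith
    have hμ1 : 1 ≤ μ := by rw [hμdef]; linarith
    have hμ2 : μ < 2 := by rw [hμdef]; linarith
    have h2x : Tendsto (fun x : ℝ => 2 * x) atTop atTop :=
      Tendsto.const_mul_atTop two_pos tendsto_id
    have hratio : ∀ᶠ x in atTop, l (2 * x) / l x < μ / θ :=
      (hlslow 2 two_pos).eventually_lt_const ((one_lt_div hθ0).2 hμθ)
    have hlogpos : ∀ᶠ x in atTop, 0 < Real.log (U x) := hlog_top.eventually_gt_atTop 0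
    have hall := heq.and ((h2x.eventually heq).and (hlpos.and ((h2x.eventually hlpos).and
      (hratio.and (hU1.and (hlogpos.and (eventually_ge_atTop (1:ℝ))))))))
    obtain ⟨x₀, hx₀⟩ := eventually_atTop.1 hall
    obtain ⟨_, _, _, _, _, _, hgx₀, hx₀1⟩ := hx₀ x₀ le_rfl
    apply aux_growth (fun x => Real.log (U x)) x₀ μ hx₀1 hgx₀ _ hμ1 hμ2 _ s hs
    · intro a b ha hab
      obtain ⟨_, _, _, _, _, hUa1, _, _⟩ := hx₀ a ha
      exact Real.log_le_log (by linarith) (U.mono hab)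
    · intro x hx
      obtain ⟨heqx, heq2x, hlx, hl2x, hrat, _, _, hx1⟩ := hx₀ x hx
      have hx0 : (0:ℝ) < x := by linarith
      have hl2 : l (2 * x) ≤ μ / θ * l x := ((div_lt_iff₀ hlx).1 hrat).le
      have hxβ : (0:ℝ) ≤ x ^ β := Real.rpow_nonneg hx0.le β
      calc Real.log (U (2 * x)) = (2 * x) ^ β * l (2 * x) := heq2x
        _ = θ * x ^ β * l (2 * x) := by
            rw [Real.mul_rpow (by norm_num) hx0.le]
        _ ≤ θ * x ^ β * (μ / θ * l x) := by
            apply mul_le_mul_of_nonneg_left hl2 (by positivity)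
        _ = μ * (x ^ β * l x) := by field_simp
        _ = μ * Real.log (U x) := by rw [heqx]
  -- main part
  intro r hr
  rw [Metric.tendsto_nhds]
  intro ε hε
  set δ := min (ε / 4) (1 / 2) with hδdef
  have hδ0 : 0 < δ := lt_min (by linarith) (by norm_num)
  have hδ1 : δ ≤ 1 / 2 := min_le_right _ _
  have hδε : 2 * δ < ε := by
    have : δ ≤ ε / 4 := min_le_left _ _
    linarith
  clear_value δ
  -- master finite integral J
  have hsδ : (0:ℝ) < r * δ := by positivity
  obtain ⟨y₀', hy₀'⟩ := eventually_atTop.1 ((hgrow (r * δ / 2) (by positivity)).and hU1)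
  set y₀ := max y₀' 0 with hy₀def
  set C := U y₀ + 1 with hCdef
  have hC : 0 < C := by have := hnn y₀; rw [hCdef]; linarith
  have hC1 : 1 ≤ C := by have := hnn y₀; rw [hCdef]; linarith
  have hJ : (∫⁻ y in Set.Ioi (0:ℝ), ENNReal.ofReal (Real.exp (-(r * δ * y))) ∂U.measure) < ⊤ := by
    apply aux_fin U C (r * δ) hC hsδ hnn
    intro y hy
    rcases le_or_gt y₀ y with h | h
    · obtain ⟨hlogy, hU1y⟩ := hy₀' y (le_trans (le_max_left _ _) h)
      have hUy0 : 0 < U y := by linarith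
      calc U y = Real.exp (Real.log (U y)) := (Real.exp_log hUy0).symm
        _ ≤ Real.exp (r * δ / 2 * y) := Real.exp_le_exp.2 hlogy
        _ ≤ C * Real.exp (r * δ / 2 * y) := by nlinarith [Real.exp_pos (r * δ / 2 * y)]
    · calc U y ≤ U y₀ := U.mono h.le
        _ ≤ C := by rw [hCdef]; linarith
        _ ≤ C * Real.exp (r * δ / 2 * y) := by
            nlinarith [Real.one_le_exp (show 0 ≤ r * δ / 2 * y by positivity)]
  set J := ∫⁻ y in Set.Ioi (0:ℝ), ENNReal.ofReal (Real.exp (-(r * δ * y))) ∂U.measure with hJdef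
  clear_value J
  set K := J.toReal + 1 with hKdef
  have hK1 : 1 ≤ K := by have := ENNReal.toReal_nonneg (a := J); rw [hKdef]; linarith
  have hK0 : 0 < K := by linarith
  clear_value K
  -- upper bound
  have hub : ∀ᶠ x in atTop, (∫⁻ y in Set.Ioi x,
      ENNReal.ofReal (Real.exp (-(r * y))) ∂U.measure)
        ≤ ENNReal.ofReal (Real.exp (-(r * (1 - δ) * x))) * J := by
    filter_upwards [eventually_ge_atTop (0:ℝ)] with x hx
    calc (∫⁻ y in Set.Ioi x, ENNReal.ofReal (Real.exp (-(r * y))) ∂U.measure)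
        ≤ ∫⁻ y in Set.Ioi x,
            ENNReal.ofReal (Real.exp (-(r * (1 - δ) * x))) *
              ENNReal.ofReal (Real.exp (-(r * δ * y))) ∂U.measure := by
          apply setLIntegral_mono (by fun_prop)
          intro y hy
          rw [← ENNReal.ofReal_mul (Real.exp_nonneg _), ← Real.exp_add]
          apply ENNReal.ofReal_le_ofReal
          apply Real.exp_le_exp.2
          have hxy : x ≤ y := (Set.mem_Ioi.1 hy).le
          nlinarith [mul_nonneg (mul_nonneg hr.le (show (0:ℝ) ≤ 1 - δ by linarith))
            (show (0:ℝ) ≤ y - x by linarith)]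
      _ = ENNReal.ofReal (Real.exp (-(r * (1 - δ) * x))) *
            ∫⁻ y in Set.Ioi x, ENNReal.ofReal (Real.exp (-(r * δ * y))) ∂U.measure :=
          lintegral_const_mul _ (hmeasf _)
      _ ≤ ENNReal.ofReal (Real.exp (-(r * (1 - δ) * x))) * J := by
          rw [hJdef]
          exact mul_le_mul_right (lintegral_mono_set (Set.Ioi_subset_Ioi hx)) _
  -- lower bound
  have hlow : ∀ᶠ x in atTop, ENNReal.ofReal (Real.exp (-(r * (1 + δ) * x)))
      ≤ ∫⁻ y in Set.Ioi x, ENNReal.ofReal (Real.exp (-(r * y))) ∂U.measure := by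
    set κ := (1 + δ) ^ β with hκdef
    have hδ1' : (1:ℝ) < 1 + δ := by linarith
    have hκ1 : 1 < κ := by
      have := Real.rpow_lt_rpow_of_exponent_lt hδ1' (show (0:ℝ) < β from hβ0)
      simpa [Real.rpow_zero] using this
    have hκ0 : (0:ℝ) < κ := by linarith
    set c' := (1 + κ) / 2 with hc'def
    have hc'1 : 1 < c' := by rw [hc'def]; linarith
    have hc'κ : c' < κ := by rw [hc'def]; linarith
    have hρ : c' / κ < 1 := (div_lt_one hκ0).2 hc'κ
    clear_value c'
    have h1δx : Tendsto (fun x : ℝ => (1 + δ) * x) atTop atTop :=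
      Tendsto.const_mul_atTop (by linarith) tendsto_id
    have hratio : ∀ᶠ x in atTop, c' / κ < l ((1 + δ) * x) / l x :=
      (hlslow (1 + δ) (by linarith)).eventually_const_lt hρ
    have hbig : ∀ᶠ x in atTop, Real.log 2 ≤ (c' - 1) * Real.log (U x) := by
      have h := hlog_top.eventually_ge_atTop (Real.log 2 / (c' - 1))
      filter_upwards [h] with x hx
      rw [div_le_iff₀ (by linarith)] at hx
      linarith
    filter_upwards [heq, h1δx.eventually heq, hlpos, h1δx.eventually hlpos, hratio,
      hU1, h1δx.eventually hU1, hbig, eventually_ge_atTop (1:ℝ)] with x heqx heq2 hlx hl2x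
        hrat hU1x hU12 hbigx hx1
    have hx0 : (0:ℝ) < x := by linarith
    have hxβ : (0:ℝ) ≤ x ^ β := Real.rpow_nonneg hx0.le β
    -- log U ((1+δ)x) ≥ c' log U x
    have hstep : c' * Real.log (U x) ≤ Real.log (U ((1 + δ) * x)) := by
      have hl2 : c' / κ * l x ≤ l ((1 + δ) * x) :=
        ((lt_div_iff₀ hlx).1 hrat).le
      calc c' * Real.log (U x) = c' * (x ^ β * l x) := by rw [heqx]
        _ = κ * (x ^ β * (c' / κ * l x)) := by field_simp
        _ ≤ κ * (x ^ β * l ((1 + δ) * x)) := by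
            apply mul_le_mul_of_nonneg_left _ hκ0.le
            exact mul_le_mul_of_nonneg_left hl2 hxβ
        _ = ((1 + δ) * x) ^ β * l ((1 + δ) * x) := by
            rw [Real.mul_rpow (by linarith : (0:ℝ) ≤ 1 + δ) hx0.le, hκdef]
            ring
        _ = Real.log (U ((1 + δ) * x)) := heq2.symm
    have hUx0 : 0 < U x := by linarith
    have hU2x0 : 0 < U ((1 + δ) * x) := by linarith
    have h2Ux : 2 * U x ≤ U ((1 + δ) * x) := by
      rw [← Real.log_le_log_iff (by linarith) hU2x0, Real.log_mul (by norm_num) (ne_of_gt hUx0)]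
      nlinarith [hbigx, hstep]
    have hdiff : 1 ≤ U ((1 + δ) * x) - U x := by linarith
    calc ENNReal.ofReal (Real.exp (-(r * (1 + δ) * x)))
        = ENNReal.ofReal (Real.exp (-(r * (1 + δ) * x))) * 1 := (mul_one _).symm
      _ ≤ ENNReal.ofReal (Real.exp (-(r * (1 + δ) * x))) *
            ENNReal.ofReal (U ((1 + δ) * x) - U x) :=
          mul_le_mul_right (ENNReal.one_le_ofReal.2 hdiff) _
      _ = ENNReal.ofReal (Real.exp (-(r * (1 + δ) * x))) * U.measure (Set.Ioc x ((1 + δ) * x)) := by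
          rw [StieltjesFunction.measure_Ioc]
      _ = ∫⁻ _ in Set.Ioc x ((1 + δ) * x),
            ENNReal.ofReal (Real.exp (-(r * (1 + δ) * x))) ∂U.measure :=
          (setLIntegral_const _ _).symm
      _ ≤ ∫⁻ y in Set.Ioc x ((1 + δ) * x), ENNReal.ofReal (Real.exp (-(r * y))) ∂U.measure := by
          apply setLIntegral_mono (hmeasf _)
          intro y hy
          apply ENNReal.ofReal_le_ofReal
          apply Real.exp_le_exp.2
          nlinarith [mul_le_mul_of_nonneg_left hy.2 hr.le]
      _ ≤ ∫⁻ y in Set.Ioi x, ENNReal.ofReal (Real.exp (-(r * y))) ∂U.measure :=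
          lintegral_mono_set Set.Ioc_subset_Ioi_self
  -- combine
  filter_upwards [hub, hlow, eventually_gt_atTop (0:ℝ),
    eventually_ge_atTop ((|Real.log K| + 1) / (r * δ))] with x hubx hlowx hx0 hxK
  set I := ∫⁻ y in Set.Ioi x, ENNReal.ofReal (Real.exp (-(r * y))) ∂U.measure with hIdef
  have hItop : I ≠ ⊤ := by
    apply ne_top_of_le_ne_top _ hubx
    exact (ENNReal.mul_lt_top ENNReal.ofReal_lt_top hJ).ne
  set T := I.toReal with hTdef
  have hTub : T ≤ Real.exp (-(r * (1 - δ) * x)) * K := by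
    have h1 := ENNReal.toReal_mono (ENNReal.mul_ne_top ENNReal.ofReal_ne_top hJ.ne) hubx
    rw [ENNReal.toReal_mul, ENNReal.toReal_ofReal (Real.exp_nonneg _)] at h1
    have h2 : J.toReal ≤ K := by rw [hKdef]; linarith
    calc T ≤ Real.exp (-(r * (1 - δ) * x)) * J.toReal := h1
      _ ≤ Real.exp (-(r * (1 - δ) * x)) * K :=
          mul_le_mul_of_nonneg_left h2 (Real.exp_nonneg _)
  have hTlb : Real.exp (-(r * (1 + δ) * x)) ≤ T :=
    (ENNReal.ofReal_le_iff_le_toReal hItop).1 hlowx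
  have hT0 : 0 < T := lt_of_lt_of_le (Real.exp_pos _) hTlb
  have hrx : 0 < r * x := by positivity
  have hloglb : -(r * (1 + δ) * x) ≤ Real.log T := by
    calc -(r * (1 + δ) * x) = Real.log (Real.exp (-(r * (1 + δ) * x))) :=
        (Real.log_exp _).symm
      _ ≤ Real.log T := Real.log_le_log (Real.exp_pos _) hTlb
  have hlogub : Real.log T ≤ -(r * (1 - δ) * x) + Real.log K := by
    calc Real.log T ≤ Real.log (Real.exp (-(r * (1 - δ) * x)) * K) :=
        Real.log_le_log hT0 hTub
      _ = -(r * (1 - δ) * x) + Real.log K := by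
          rw [Real.log_mul (Real.exp_ne_zero _) (ne_of_gt hK0), Real.log_exp]
  have hlogK : Real.log K ≤ r * δ * x := by
    rw [div_le_iff₀ (by positivity)] at hxK
    calc Real.log K ≤ |Real.log K| := le_abs_self _
      _ ≤ r * δ * x := by nlinarith
  rw [Real.dist_eq]
  have hFub : -Real.log T / (r * x) ≤ 1 + δ := by
    rw [div_le_iff₀ hrx]
    nlinarith
  have hFlb : 1 - 2 * δ ≤ -Real.log T / (r * x) := by
    rw [le_div_iff₀ hrx]
    nlinarith
  have habs : |(-Real.log T / (r * x)) - 1| ≤ 2 * δ := by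
    apply abs_le.2
    constructor <;> [linarith; linarith]
  exact lt_of_le_of_lt habs hδε
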